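/- Let (X,d) be a length space, Ω ⊂ X open, f: Ω → ℝ continuous with f ≥ 0, and u: Ω → ℝ continuous. If u satisfies the curve-based subsolution property u(ξ(t₁)) ≤ ∫_{t₁}^{t₂} f(ξ(s)) ds + u(ξ(t₂)) for all 1-Lipschitz curves ξ in Ω and t₁ < t₂, then |∇⁻u|(x₀) ≤ f(x₀) for every x₀ ∈ Ω. -/

import Mathlib

open Filter Topology Set

/-- Sub-slope `|∇⁻u|(x) = limsup_{y→x} max{u(x)−u(y),0}/d(x,y)`. -/
noncomputable def subSlope {X : Type*} [MetricSpace X] (u : X → ℝ) (x : X) : ℝ :=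
  Filter.limsup (fun y => max (u x - u y) 0 / dist x y) (𝓝[≠] x)

/-- in a length space, a continuous function satisfying the
curve-based subsolution property of the eikonal equation `|∇u| = f`
satisfies `|∇⁻u|(x₀) ≤ f(x₀)` at every point of `Ω` (Monge subsolution). -/
theorem c_subsolution_is_monge_subsolution {X : Type*} [MetricSpace X]
    (hlen : ∀ x y : X, ∀ ε > (0 : ℝ), ∃ ξ : ℝ → X, LipschitzWith 1 ξ ∧ ξ 0 = x ∧
      ∃ T : ℝ, 0 ≤ T ∧ T ≤ dist x y + ε ∧ ξ T = y)
    (Ω : Set X) (hΩ : IsOpen Ω) (f u : X → ℝ)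
    (hf : ContinuousOn f Ω) (hf0 : ∀ x ∈ Ω, 0 ≤ f x)
    (hu : ContinuousOn u Ω)
    (hsub : ∀ ξ : ℝ → X, LipschitzWith 1 ξ → (∀ t : ℝ, ξ t ∈ Ω) →
      ∀ t₁ t₂ : ℝ, t₁ < t₂ → u (ξ t₁) ≤ (∫ s in t₁..t₂, f (ξ s)) + u (ξ t₂)) :
    ∀ x₀ ∈ Ω, subSlope u x₀ ≤ f x₀ := by
  intro x₀ hx₀
  have hf0' : 0 ≤ f x₀ := hf0 x₀ hx₀
  rcases eq_or_neBot (𝓝[≠] x₀) with hbot | hne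
  · -- degenerate case: x₀ isolated
    have : subSlope u x₀ = sInf (univ : Set ℝ) := by
      simp [subSlope, hbot, Filter.limsup_eq, Set.eq_univ_iff_forall]
    rw [this, csInf_of_not_bddBelow not_bddBelow_univ, Real.sInf_empty]
    exact hf0'
  -- main case
  have key : ∀ ε > (0 : ℝ), subSlope u x₀ ≤ (f x₀ + ε) * (1 + ε) := by
    intro ε hε
    have hfc : ContinuousAt f x₀ := hf.continuousAt (hΩ.mem_nhds hx₀)
    have h1 : ∀ᶠ z in 𝓝 x₀, f z < f x₀ + ε := hfc (Iio_mem_nhds (by linarith))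
    have h2 : ∀ᶠ z in 𝓝 x₀, z ∈ Ω := hΩ.mem_nhds hx₀
    obtain ⟨δ, hδpos, hδ⟩ := Metric.eventually_nhds_iff.mp (h1.and h2)
    -- eventual bound on the difference quotient
    have hev : ∀ᶠ y in 𝓝[≠] x₀,
        max (u x₀ - u y) 0 / dist x₀ y ≤ (f x₀ + ε) * (1 + ε) := by
      have hball : Metric.ball x₀ (δ / 8) ∈ 𝓝[≠] x₀ :=
        nhdsWithin_le_nhds (Metric.ball_mem_nhds x₀ (by linarith))
      filter_upwards [hball, self_mem_nhdsWithin] with y hy hyne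
      have hyx : y ≠ x₀ := hyne
      set d : ℝ := dist x₀ y with hd
      have hdpos : 0 < d := dist_pos.mpr (Ne.symm hyx)
      have hdlt : d < δ / 8 := by
        rw [hd, dist_comm]; exact hy
      set ε' : ℝ := min (ε * d) (δ / 2) with hε'
      have hε'pos : 0 < ε' := lt_min (mul_pos hε hdpos) (by linarith)
      obtain ⟨ξ, hξlip, hξ0, T, hT0, hTle, hξT⟩ := hlen x₀ y ε' hε'pos
      have hTδ : T < δ := by
        have : ε' ≤ δ / 2 := min_le_right _ _
        linarith
      have hTd : d ≤ T := by
        have := hξlip.dist_le_mul 0 T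
        rw [hξ0, hξT] at this
        simpa [abs_of_nonneg hT0, dist_comm] using this
      have hTpos : 0 < T := lt_of_lt_of_le hdpos hTd
      -- clamped curve
      set c : ℝ → ℝ := fun t => min (max t 0) T with hc
      have hclip : LipschitzWith 1 c := (LipschitzWith.id.max_const 0).min_const T
      set ξ' : ℝ → X := fun t => ξ (c t) with hξ'
      have hξ'lip : LipschitzWith 1 ξ' := by
        have := hξlip.comp hclip
        rw [one_mul] at this; exact this
      have hc_mem : ∀ t, 0 ≤ c t ∧ c t ≤ T := fun t =>
        ⟨le_min (le_max_right t 0) hT0, min_le_right _ _⟩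
      have hmemball : ∀ t, ξ' t ∈ Metric.ball x₀ δ := by
        intro t
        have h := hξlip.dist_le_mul (c t) 0
        rw [hξ0] at h
        have : dist (ξ (c t)) x₀ ≤ c t := by
          simpa [abs_of_nonneg (hc_mem t).1, Real.dist_eq] using h
        have : dist (ξ' t) x₀ ≤ T := le_trans this (hc_mem t).2
        exact Metric.mem_ball.mpr (lt_of_le_of_lt this hTδ)
      have hmem : ∀ t, ξ' t ∈ Ω := fun t => (hδ (Metric.mem_ball.mp (hmemball t))).2
      have hξ'0 : ξ' 0 = x₀ := by
        simp only [hξ', hc]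
        rw [max_self, min_eq_left hT0, hξ0]
      have hξ'T : ξ' T = y := by
        simp only [hξ', hc]
        rw [max_eq_left hT0, min_self, hξT]
      -- the subsolution inequality
      have hineq := hsub ξ' hξ'lip hmem 0 T hTpos
      rw [hξ'0, hξ'T] at hineq
      -- bound the integral
      have hcont : Continuous (fun s => f (ξ' s)) :=
        hf.comp_continuous hξ'lip.continuous hmem
      have hint1 : IntervalIntegrable (fun s => f (ξ' s)) MeasureTheory.volume 0 T :=
        hcont.intervalIntegrable 0 T
      have hint2 : IntervalIntegrable (fun _ : ℝ => f x₀ + ε) MeasureTheory.volume 0 T :=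
        intervalIntegrable_const
      have hptwise : ∀ s ∈ Set.Icc (0 : ℝ) T, f (ξ' s) ≤ f x₀ + ε := by
        intro s _
        exact le_of_lt (hδ (Metric.mem_ball.mp (hmemball s))).1
      have hi : (∫ s in (0:ℝ)..T, f (ξ' s)) ≤ ∫ _ in (0:ℝ)..T, (f x₀ + ε) :=
        intervalIntegral.integral_mono_on (le_of_lt hTpos) hint1 hint2 hptwise
      rw [intervalIntegral.integral_const, smul_eq_mul, sub_zero] at hi
      have hub : u x₀ - u y ≤ (f x₀ + ε) * T := by linarith
      have hTd' : T ≤ (1 + ε) * d := by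
        have : ε' ≤ ε * d := min_le_left _ _
        nlinarith
      have hfεpos : 0 ≤ f x₀ + ε := by linarith
      have hub2 : u x₀ - u y ≤ (f x₀ + ε) * (1 + ε) * d := by
        calc u x₀ - u y ≤ (f x₀ + ε) * T := hub
          _ ≤ (f x₀ + ε) * ((1 + ε) * d) := by
              exact mul_le_mul_of_nonneg_left hTd' hfεpos
          _ = (f x₀ + ε) * (1 + ε) * d := by ring
      rw [div_le_iff₀ hdpos]
      refine max_le hub2 ?_
      positivity
    -- conclude via limsup
    have hcob : Filter.IsCoboundedUnder (· ≤ ·) (𝓝[≠] x₀)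
        (fun y => max (u x₀ - u y) 0 / dist x₀ y) := by
      haveI := hne
      exact Filter.isCoboundedUnder_le_of_eventually_le (𝓝[≠] x₀) (x := 0)
        (Filter.Eventually.of_forall fun y => by positivity)
    exact Filter.limsup_le_of_le hcob hev
  -- let ε → 0⁺
  have htend : Tendsto (fun ε : ℝ => (f x₀ + ε) * (1 + ε)) (𝓝[>] 0) (𝓝 (f x₀)) := by
    have : Tendsto (fun ε : ℝ => (f x₀ + ε) * (1 + ε)) (𝓝 0) (𝓝 ((f x₀ + 0) * (1 + 0))) := by
      exact ((continuous_const.add continuous_id).mul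
        (continuous_const.add continuous_id)).tendsto 0
    simpa using this.mono_left nhdsWithin_le_nhds
  exact ge_of_tendsto htend (eventually_nhdsWithin_of_forall fun ε hε => key ε hε)
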